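/- Let F be a finite-dimensional complex vector space with two inner products ⟨·,·⟩ and [·,·], and let Γ and Γ' be two bases each orthonormal for [·,·] and orthogonal for ⟨·,·⟩. Then ∑_{γ∈Γ} √⟨γ,γ⟩ = ∑_{γ'∈Γ'} √⟨γ',γ'⟩. -/

import Mathlib

open scoped InnerProductSpace ComplexConjugate
open Polynomial

private lemma charpoly_diagonal' {n R : Type*} [Fintype n] [DecidableEq n] [CommRing R]
    (d : n → R) : (Matrix.diagonal d).charpoly = ∏ i, (X - C (d i)) := by
  have h : Matrix.charmatrix (Matrix.diagonal d) =
      Matrix.diagonal (fun i => X - C (d i)) := by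
    ext i j
    by_cases hij : i = j
    · subst hij; simp [Matrix.charmatrix_apply_eq]
    · simp [Matrix.charmatrix_apply_ne _ _ _ hij, Matrix.diagonal_apply_ne _ hij,
        Matrix.diagonal_apply_ne d hij]
  rw [Matrix.charpoly, h, Matrix.det_diagonal]

/-- Let `F` be a finite-dimensional complex vector space with two inner products
`⟨·,·⟩` and `[·,·]` (the latter given as a positive-definite hermitian form `B`),
and let `Γ`, `Γ'` be two bases, each orthonormal for `[·,·]` and orthogonal for
`⟨·,·⟩`.  Then `∑_{γ∈Γ} √⟨γ,γ⟩ = ∑_{γ'∈Γ'} √⟨γ',γ'⟩`. -/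
theorem sigma_independent_of_basis
    (F : Type*) [NormedAddCommGroup F] [InnerProductSpace ℂ F]
    [FiniteDimensional ℂ F]
    (B : F → F → ℂ)
    (hB_add : ∀ x y z : F, B x (y + z) = B x y + B x z)
    (hB_smul : ∀ (c : ℂ) (x y : F), B x (c • y) = c * B x y)
    (hB_herm : ∀ x y : F, B y x = conj (B x y))
    (hB_pos : ∀ x : F, x ≠ 0 → 0 < (B x x).re)
    (ι ι' : Type*) [Fintype ι] [Fintype ι'] [DecidableEq ι] [DecidableEq ι']
    (b : Module.Basis ι ℂ F) (b' : Module.Basis ι' ℂ F)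
    (hb_on : ∀ i j, B (b i) (b j) = if i = j then 1 else 0)
    (hb'_on : ∀ i j, B (b' i) (b' j) = if i = j then 1 else 0)
    (hb_orth : ∀ i j, i ≠ j → ⟪b i, b j⟫_ℂ = 0)
    (hb'_orth : ∀ i j, i ≠ j → ⟪b' i, b' j⟫_ℂ = 0) :
    ∑ i, Real.sqrt (⟪b i, b i⟫_ℂ).re = ∑ i, Real.sqrt (⟪b' i, b' i⟫_ℂ).re := by
  -- B as a family of linear maps in the second argument
  set Bl : F → F →ₗ[ℂ] ℂ := fun u =>
    { toFun := B u
      map_add' := hB_add u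
      map_smul' := fun c y => hB_smul c u y } with hBl
  have hBl_apply : ∀ u y, Bl u y = B u y := fun _ _ => rfl
  -- conjugate-linearity in the first argument
  have hB_smul_left : ∀ (c : ℂ) (x y : F), B (c • x) y = conj c * B x y := by
    intro c x y
    rw [hB_herm, hB_smul, map_mul, ← hB_herm]
  have hB_sub_left : ∀ x y z : F, B (x - y) z = B x z - B y z := by
    intro x y z
    have h1 : B z (x - y) = B z x - B z y := by
      simpa [hBl_apply] using map_sub (Bl z) x y
    rw [hB_herm z (x - y), h1, map_sub, ← hB_herm z x, ← hB_herm z y]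
  -- nondegeneracy
  have hB_nondeg : ∀ u : F, (∀ k, B u (b' k) = 0) → u = 0 := by
    intro u hu
    by_contra hne
    have hall : ∀ y, B u y = 0 := by
      intro y
      have h2 : Bl u y = ∑ k, (b'.repr y) k * Bl u (b' k) := by
        conv_lhs => rw [← b'.sum_repr y]
        rw [map_sum]; simp
      rw [hBl_apply] at h2
      rw [h2]
      refine Finset.sum_eq_zero fun k _ => ?_
      rw [hBl_apply, hu k, mul_zero]
    have := hB_pos u hne
    rw [hall u] at this
    simp at this
  -- the operator T with B (T x) y = ⟪x, y⟫
  set T : F →ₗ[ℂ] F :=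
    { toFun := fun x => ∑ j, ⟪b j, x⟫_ℂ • b j
      map_add' := by
        intro x y
        simp [inner_add_right, add_smul, Finset.sum_add_distrib]
      map_smul' := by
        intro c x
        simp [inner_smul_right, mul_smul, Finset.smul_sum] } with hT
  have hT_apply : ∀ x, T x = ∑ j, ⟪b j, x⟫_ℂ • b j := fun _ => rfl
  have hT_key : ∀ x y, B (T x) y = ⟪x, y⟫_ℂ := by
    intro x y
    have expand : ∀ z : F, B (T x) z = ∑ j, ⟪x, b j⟫_ℂ * B (b j) z := by
      intro z
      rw [hB_herm z (T x)]
      have h1 : Bl z (T x) = ∑ j, ⟪b j, x⟫_ℂ * Bl z (b j) := by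
        rw [hT_apply, map_sum]; simp
      rw [hBl_apply] at h1
      rw [h1, map_sum]
      refine Finset.sum_congr rfl fun j _ => ?_
      rw [map_mul, hBl_apply, ← hB_herm z (b j), inner_conj_symm]
    have hbase : ∀ k, B (T x) (b k) = ⟪x, b k⟫_ℂ := by
      intro k
      rw [expand]
      rw [Finset.sum_eq_single k (fun j _ hjk => by rw [hb_on]; simp [hjk])
        (fun h => absurd (Finset.mem_univ k) h), hb_on]
      simp
    have h3 : Bl (T x) y = ⟪x, y⟫_ℂ := by
      conv_lhs => rw [← b.sum_repr y]
      rw [map_sum]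
      conv_rhs => rw [← b.sum_repr y, inner_sum]
      refine Finset.sum_congr rfl fun k _ => ?_
      rw [map_smul, smul_eq_mul, hBl_apply, hbase k, inner_smul_right]
    simpa [hBl_apply] using h3
  -- eigenvalues
  set d : ι → ℂ := fun i => ⟪b i, b i⟫_ℂ with hd
  set d' : ι' → ℂ := fun j => ⟪b' j, b' j⟫_ℂ with hd'
  have hd'_conj : ∀ j, conj (d' j) = d' j := fun j => inner_conj_symm (b' j) (b' j)
  -- b is an eigenbasis
  have hTb : ∀ i, T (b i) = d i • b i := by
    intro i
    rw [hT_apply]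
    rw [Finset.sum_eq_single i (fun j _ hji => by rw [hb_orth j i hji, zero_smul])
      (fun h => absurd (Finset.mem_univ i) h)]
  -- b' is an eigenbasis
  have hTb' : ∀ j, T (b' j) = d' j • b' j := by
    intro j
    have key : ∀ k, B (T (b' j) - d' j • b' j) (b' k) = 0 := by
      intro k
      rw [hB_sub_left, hT_key, hB_smul_left, hd'_conj, hb'_on]
      by_cases hjk : j = k
      · subst hjk; simp [hd']
      · rw [hb'_orth j k hjk]; simp [hjk]
    have h4 := hB_nondeg _ key
    rwa [sub_eq_zero] at h4
  -- matrices of T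
  have hmat : LinearMap.toMatrix b b T = Matrix.diagonal d := by
    ext i j
    rw [LinearMap.toMatrix_apply, hTb j]
    simp only [Finsupp.single_apply, Matrix.diagonal_apply, map_smul, Module.Basis.repr_self,
      Finsupp.smul_apply, smul_eq_mul]
    by_cases hij : i = j
    · simp [hij]
    · simp [hij, Ne.symm hij]
  have hmat' : LinearMap.toMatrix b' b' T = Matrix.diagonal d' := by
    ext i j
    rw [LinearMap.toMatrix_apply, hTb' j]
    simp only [Finsupp.single_apply, Matrix.diagonal_apply, map_smul, Module.Basis.repr_self,
      Finsupp.smul_apply, smul_eq_mul]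
    by_cases hij : i = j
    · simp [hij]
    · simp [hij, Ne.symm hij]
  -- charpoly equality
  have hcp : ∏ i, (X - C (d i)) = ∏ j, (X - C (d' j)) := by
    rw [← charpoly_diagonal' d, ← charpoly_diagonal' d', ← hmat, ← hmat',
      LinearMap.charpoly_toMatrix, LinearMap.charpoly_toMatrix]
  -- multiset equality of eigenvalues
  have hmulti : Multiset.map d Finset.univ.val = Multiset.map d' Finset.univ.val := by
    have h1 : (Multiset.map (fun a : ℂ => X - C a) (Multiset.map d Finset.univ.val)).prod
        = ∏ i, (X - C (d i)) := by rw [Multiset.map_map]; rfl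
    have h2 : (Multiset.map (fun a : ℂ => X - C a) (Multiset.map d' Finset.univ.val)).prod
        = ∏ j, (X - C (d' j)) := by rw [Multiset.map_map]; rfl
    have h5 := congrArg Polynomial.roots (h1.trans (hcp.trans h2.symm))
    rwa [roots_multiset_prod_X_sub_C, roots_multiset_prod_X_sub_C] at h5
  -- conclude
  have e1 : ∑ i, Real.sqrt (⟪b i, b i⟫_ℂ).re
      = (Multiset.map (fun c : ℂ => Real.sqrt c.re) (Multiset.map d Finset.univ.val)).sum := by
    rw [Multiset.map_map]; rfl
  have e2 : ∑ j, Real.sqrt (⟪b' j, b' j⟫_ℂ).re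
      = (Multiset.map (fun c : ℂ => Real.sqrt c.re) (Multiset.map d' Finset.univ.val)).sum := by
    rw [Multiset.map_map]; rfl
  rw [e1, e2, hmulti]
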